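/- Let b : ℝ → ℝ be continuous and K : ℝ × ℝ → ℝ be jointly continuous. For y in an interval around x, let F_y(z) := b(z) + K(z,y), and suppose: (i) for each y there is a leftmost maximizer m(y) of F_y over ℝ; (ii) y ↦ m(y) is nondecreasing; (iii) all maximizers for y ∈ [x−1, x] lie in a common compact set. Then lim_{y ↗ x} m(y) = m(x). -/

import Mathlib

/-- Left-continuity of leftmost maximizers in the target point. -/
theorem stmt17 (b : ℝ → ℝ) (K : ℝ → ℝ → ℝ) (hb : Continuous b)
    (hK : Continuous fun p : ℝ × ℝ => K p.1 p.2)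
    (x : ℝ) (m : ℝ → ℝ)
    (hmax : ∀ y ∈ Set.Icc (x - 1) x,
      (∀ z, b z + K z y ≤ b (m y) + K (m y) y) ∧
      ∀ z, (∀ w, b w + K w y ≤ b z + K z y) → m y ≤ z)
    (hmono : MonotoneOn m (Set.Icc (x - 1) x))
    (C : Set ℝ) (hC : IsCompact C)
    (hin : ∀ y ∈ Set.Icc (x - 1) x, ∀ z, (∀ w, b w + K w y ≤ b z + K z y) → z ∈ C) :
    Filter.Tendsto m (nhdsWithin x (Set.Iio x)) (nhds (m x)) := by
  set g : ℝ → ℝ := fun y => m (max y (x - 1)) with hg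
  have hmemIcc : ∀ y ∈ Set.Iio x, max y (x - 1) ∈ Set.Icc (x - 1) x := by
    intro y hy
    exact ⟨le_max_right _ _, max_le (le_of_lt hy) (by linarith)⟩
  have hgmono : MonotoneOn g (Set.Iio x) := by
    intro y hy y' hy' hle
    exact hmono (hmemIcc y hy) (hmemIcc y' hy') (max_le_max hle le_rfl)
  have hgC : ∀ y ∈ Set.Iio x, g y ∈ C := by
    intro y hy
    exact hin _ (hmemIcc y hy) _ (hmax _ (hmemIcc y hy)).1
  have hbdd : BddAbove (g '' Set.Iio x) := by
    rcases hC.bddAbove with ⟨M, hM⟩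
    exact ⟨M, by rintro _ ⟨y, hy, rfl⟩; exact hM (hgC y hy)⟩
  have htend : Filter.Tendsto g (nhdsWithin x (Set.Iio x))
      (nhds (sSup (g '' Set.Iio x))) := hgmono.tendsto_nhdsLT hbdd
  set L := sSup (g '' Set.Iio x) with hL
  have heq : ∀ᶠ y in nhdsWithin x (Set.Iio x), m y = g y := by
    filter_upwards [Ioo_mem_nhdsLT (show x - 1 < x by linarith)] with y hy
    simp [hg, max_eq_left hy.1.le]
  have htendm : Filter.Tendsto m (nhdsWithin x (Set.Iio x)) (nhds L) :=
    htend.congr' (heq.mono fun y h => h.symm)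
  have hxIcc : x ∈ Set.Icc (x - 1) x := ⟨by linarith, le_rfl⟩
  -- L ≤ m x
  have hLle : L ≤ m x := by
    apply csSup_le (Set.nonempty_Iio.image g)
    rintro _ ⟨y, hy, rfl⟩
    exact hmono (hmemIcc y hy) hxIcc (hmemIcc y hy).2
  -- L is a maximizer at x
  have hne : (nhdsWithin x (Set.Iio x)).NeBot := nhdsLT_neBot x
  have hLmax : ∀ w, b w + K w x ≤ b L + K L x := by
    intro w
    have h1 : Filter.Tendsto (fun y => b w + K w y) (nhdsWithin x (Set.Iio x))
        (nhds (b w + K w x)) := by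
      have : Continuous fun y => b w + K w y := by
        exact continuous_const.add (hK.comp (continuous_const.prodMk continuous_id))
      exact (this.tendsto x).mono_left nhdsWithin_le_nhds
    have h2 : Filter.Tendsto (fun y => b (m y) + K (m y) y) (nhdsWithin x (Set.Iio x))
        (nhds (b L + K L x)) := by
      have hc : Continuous fun p : ℝ × ℝ => b p.1 + K p.1 p.2 :=
        (hb.comp continuous_fst).add hK
      have : Filter.Tendsto (fun y => ((m y, y) : ℝ × ℝ)) (nhdsWithin x (Set.Iio x))
          (nhds (L, x)) :=
        htendm.prodMk_nhds (Filter.tendsto_id.mono_left nhdsWithin_le_nhds)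
      exact (hc.tendsto (L, x)).comp this
    refine le_of_tendsto_of_tendsto h1 h2 ?_
    filter_upwards [Ioo_mem_nhdsLT (show x - 1 < x by linarith)] with y hy
    exact (hmax y ⟨hy.1.le, hy.2.le⟩).1 w
  have hmxle : m x ≤ L := (hmax x hxIcc).2 L hLmax
  have : L = m x := le_antisymm hLle hmxle
  rwa [this] at htendm
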